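/- arXiv:2007.07847 — 5 statements merged into one kernel-verified Lean document; each statement's English description precedes it below -/
import Mathlib

section
/- Let K ≥ 2 and k̃ ∈ Fin K. Let v : Fin K → ℕ → ℕ → ℝ and β : ℕ → ℕ → ℝ. Assume: (i) there exist real numbers β̲ > 0 and β̄ < 1 such that, eventually along the product filter, β̲ ≤ β(n,m) ≤ β̄; (ii) for every k ≠ k̃, v_k(n,m) → 1 along the product filter; (iii) v_{k̃}(n,m) → 0 along the product filter. Then there exist N, M such that for all n ≥ N and m ≥ M and all k ∈ Fin K: v_k(n,m) > β(n,m) if and only if k ≠ k̃; that is, the thresholding decision d̂(v(n,m), β(n,m)) equals the oracle decision d̃ defined by d̃_k = 1 if k ≠ k̃ and d̃_{k̃} = 0. -/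
open Filter

/-- Asymptotic optimality of the multiple testing procedure: if the posterior
probabilities of the alternative hypotheses converge to 1 for all `k ≠ k₀` and to 0
for `k = k₀` (the best model), and the penalty sequence `β(n,m)` is eventually bounded
away from 0 and 1, then for all sufficiently large `n` and `m` the thresholding decision
equals the oracle decision rejecting exactly the hypotheses `k ≠ k₀`. -/
theorem multiple_testing_asymptotically_optimal
    (K : ℕ) (hK : 2 ≤ K) (k₀ : Fin K)
    (v : Fin K → ℕ → ℕ → ℝ) (β : ℕ → ℕ → ℝ)
    (hβ : ∃ βlo βhi : ℝ, 0 < βlo ∧ βhi < 1 ∧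
      ∀ᶠ p : ℕ × ℕ in atTop ×ˢ atTop, βlo ≤ β p.1 p.2 ∧ β p.1 p.2 ≤ βhi)
    (hv1 : ∀ k : Fin K, k ≠ k₀ →
      Tendsto (fun p : ℕ × ℕ => v k p.1 p.2) (atTop ×ˢ atTop) (nhds 1))
    (hv0 : Tendsto (fun p : ℕ × ℕ => v k₀ p.1 p.2) (atTop ×ˢ atTop) (nhds 0)) :
    ∃ N M : ℕ, ∀ n ≥ N, ∀ m ≥ M, ∀ k : Fin K,
      v k n m > β n m ↔ k ≠ k₀ := by
  obtain ⟨βlo, βhi, hlo, hhi, hβev⟩ := hβ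
  have h0 : ∀ᶠ p : ℕ × ℕ in atTop ×ˢ atTop, v k₀ p.1 p.2 < βlo :=
    hv0 (Iio_mem_nhds hlo)
  have h1 : ∀ᶠ p : ℕ × ℕ in atTop ×ˢ atTop, ∀ k : Fin K, k ≠ k₀ →
      βhi < v k p.1 p.2 := by
    rw [eventually_all]
    intro k
    by_cases hk : k = k₀
    · exact Eventually.of_forall fun _ h => absurd hk h
    · filter_upwards [hv1 k hk (Ioi_mem_nhds hhi)] with p hp _
      exact hp
  have hall : ∀ᶠ p : ℕ × ℕ in atTop ×ˢ atTop, ∀ k : Fin K,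
      v k p.1 p.2 > β p.1 p.2 ↔ k ≠ k₀ := by
    filter_upwards [hβev, h0, h1] with p hβp h0p h1p k
    constructor
    · intro h hk
      subst hk
      exact absurd (h0p.trans_le hβp.1) (not_lt.mpr h.le)
    · intro hk
      exact lt_of_le_of_lt hβp.2 (h1p k hk)
  rw [eventually_prod_iff] at hall
  obtain ⟨pa, hpa, pb, hpb, h⟩ := hall
  rw [eventually_atTop] at hpa hpb
  obtain ⟨N, hN⟩ := hpa
  obtain ⟨M, hM⟩ := hpb
  exact ⟨N, M, fun n hn m hm => h (hN n hn) (hM m hm)⟩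
end

section
/- Let K ≥ 2 and k̃ ∈ Fin K. Let v : Fin K → ℕ → ℕ → [0,1] and β : ℕ → ℕ → ℝ. Assume: (i) there exist real numbers β̲ > 0 and β̄ < 1 such that, eventually along the product filter, β̲ ≤ β(n,m) ≤ β̄; (ii) for every k ≠ k̃, v_k(n,m) → 1 along the product filter; (iii) v_{k̃}(n,m) → 0 along the product filter. Then the conditional false discovery rate of the thresholding decision, cFDR(n,m) = cFDR(d̂(v(n,m), β(n,m)), v(n,m)), converges to 0 along the product filter. -/
open Filter Finset

/-- Convergence of the conditional false discovery rate of the thresholding decision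
to zero: `cFDR(d, v) = (Σ_k d_k (1 − v_k)) / max(Σ_k d_k, 1)` with
`d_k = 1` iff `v_k > β`. -/
theorem cFDR_tendsto_zero
    (K : ℕ) (hK : 2 ≤ K) (k₀ : Fin K)
    (v : Fin K → ℕ → ℕ → ℝ)
    (hv01 : ∀ k n m, 0 ≤ v k n m ∧ v k n m ≤ 1)
    (β : ℕ → ℕ → ℝ)
    (hβ : ∃ βlo βhi : ℝ, 0 < βlo ∧ βhi < 1 ∧
      ∀ᶠ p : ℕ × ℕ in atTop ×ˢ atTop, βlo ≤ β p.1 p.2 ∧ β p.1 p.2 ≤ βhi)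
    (hv1 : ∀ k : Fin K, k ≠ k₀ →
      Tendsto (fun p : ℕ × ℕ => v k p.1 p.2) (atTop ×ˢ atTop) (nhds 1))
    (hv0 : Tendsto (fun p : ℕ × ℕ => v k₀ p.1 p.2) (atTop ×ˢ atTop) (nhds 0)) :
    Tendsto
      (fun p : ℕ × ℕ =>
        (∑ k : Fin K, (if v k p.1 p.2 > β p.1 p.2 then (1 : ℝ) else 0) * (1 - v k p.1 p.2)) /
          max (∑ k : Fin K, (if v k p.1 p.2 > β p.1 p.2 then (1 : ℝ) else 0)) 1)
      (atTop ×ˢ atTop) (nhds 0) := by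
  obtain ⟨βlo, βhi, hlo, hhi, hev⟩ := hβ
  have hsmall : ∀ᶠ p : ℕ × ℕ in atTop ×ˢ atTop, v k₀ p.1 p.2 ≤ β p.1 p.2 := by
    filter_upwards [hev, hv0.eventually (eventually_lt_nhds hlo)] with p hβp hvp
    exact le_of_lt (lt_of_lt_of_le hvp hβp.1)
  have hh : Tendsto (fun p : ℕ × ℕ => ∑ k ∈ (univ : Finset (Fin K)).erase k₀,
      (1 - v k p.1 p.2)) (atTop ×ˢ atTop) (nhds 0) := by
    have h1 : Tendsto (fun p : ℕ × ℕ => ∑ k ∈ (univ : Finset (Fin K)).erase k₀,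
        (1 - v k p.1 p.2)) (atTop ×ˢ atTop)
        (nhds (∑ _k ∈ (univ : Finset (Fin K)).erase k₀, ((1 : ℝ) - 1))) :=
      tendsto_finset_sum _ fun k hk => (hv1 k (Finset.mem_erase.mp hk).1).const_sub 1
    simpa using h1
  refine tendsto_of_tendsto_of_tendsto_of_le_of_le' tendsto_const_nhds hh ?_ ?_
  · refine Eventually.of_forall fun p => ?_
    refine div_nonneg (Finset.sum_nonneg fun k _ => mul_nonneg ?_ ?_) ?_
    · split <;> norm_num
    · linarith [(hv01 k p.1 p.2).2]
    · exact le_trans zero_le_one (le_max_right _ 1)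
  · filter_upwards [hsmall] with p hp
    have hnum0 : 0 ≤ ∑ k : Fin K, (if v k p.1 p.2 > β p.1 p.2 then (1 : ℝ) else 0) *
        (1 - v k p.1 p.2) := by
      refine Finset.sum_nonneg fun k _ => mul_nonneg ?_ ?_
      · split <;> norm_num
      · linarith [(hv01 k p.1 p.2).2]
    refine le_trans (div_le_self hnum0 (le_max_right _ 1)) ?_
    rw [← Finset.add_sum_erase _ _ (Finset.mem_univ k₀), if_neg (not_lt.mpr hp), zero_mul,
      zero_add]
    refine Finset.sum_le_sum fun k hk => ?_
    have h1 := (hv01 k p.1 p.2).2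
    split
    · rw [one_mul]
    · rw [zero_mul]; linarith
end

section
/- Let K ≥ 2 and k̃ ∈ Fin K. Let v : Fin K → ℕ → ℕ → [0,1] and β : ℕ → ℕ → ℝ. Assume: (i) there exist real numbers β̲ > 0 and β̄ < 1 such that, eventually along the product filter, β̲ ≤ β(n,m) ≤ β̄; (ii) for every k ≠ k̃, v_k(n,m) → 1 along the product filter; (iii) v_{k̃}(n,m) → 0 along the product filter. Then the conditional false non-discovery rate of the thresholding decision, cFNR(n,m) = cFNR(d̂(v(n,m), β(n,m)), v(n,m)), converges to 0 along the product filter. -/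
open Filter Finset

/-- Convergence of the conditional false non-discovery rate of the thresholding decision
to zero: `cFNR(d, v) = (Σ_k (1 − d_k) v_k) / max(Σ_k (1 − d_k), 1)` with
`d_k = 1` iff `v_k > β`. -/
theorem cFNR_tendsto_zero
    (K : ℕ) (hK : 2 ≤ K) (k₀ : Fin K)
    (v : Fin K → ℕ → ℕ → ℝ)
    (hv01 : ∀ k n m, 0 ≤ v k n m ∧ v k n m ≤ 1)
    (β : ℕ → ℕ → ℝ)
    (hβ : ∃ βlo βhi : ℝ, 0 < βlo ∧ βhi < 1 ∧
      ∀ᶠ p : ℕ × ℕ in atTop ×ˢ atTop, βlo ≤ β p.1 p.2 ∧ β p.1 p.2 ≤ βhi)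
    (hv1 : ∀ k : Fin K, k ≠ k₀ →
      Tendsto (fun p : ℕ × ℕ => v k p.1 p.2) (atTop ×ˢ atTop) (nhds 1))
    (hv0 : Tendsto (fun p : ℕ × ℕ => v k₀ p.1 p.2) (atTop ×ˢ atTop) (nhds 0)) :
    Tendsto
      (fun p : ℕ × ℕ =>
        (∑ k : Fin K, (1 - (if v k p.1 p.2 > β p.1 p.2 then (1 : ℝ) else 0)) * v k p.1 p.2) /
          max (∑ k : Fin K, (1 - (if v k p.1 p.2 > β p.1 p.2 then (1 : ℝ) else 0))) 1)
      (atTop ×ˢ atTop) (nhds 0) := by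
  obtain ⟨βlo, βhi, hlo, hhi, hβev⟩ := hβ
  have hev : ∀ᶠ p : ℕ × ℕ in atTop ×ˢ atTop,
      (∑ k : Fin K, (1 - (if v k p.1 p.2 > β p.1 p.2 then (1 : ℝ) else 0)) * v k p.1 p.2) /
          max (∑ k : Fin K, (1 - (if v k p.1 p.2 > β p.1 p.2 then (1 : ℝ) else 0))) 1
        = v k₀ p.1 p.2 := by
    have h1 : ∀ᶠ p : ℕ × ℕ in atTop ×ˢ atTop, ∀ k : Fin K, k ≠ k₀ → βhi < v k p.1 p.2 := by
      rw [Filter.eventually_all]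
      intro k
      by_cases hk : k = k₀
      · simp [hk]
      · filter_upwards [(hv1 k hk).eventually (eventually_gt_nhds hhi)] with p hp _
        exact hp
    have h0 : ∀ᶠ p : ℕ × ℕ in atTop ×ˢ atTop, v k₀ p.1 p.2 < βlo :=
      hv0.eventually (eventually_lt_nhds hlo)
    filter_upwards [h1, h0, hβev] with p hp1 hp0 hpβ
    have hind : ∀ k : Fin K, (if v k p.1 p.2 > β p.1 p.2 then (1 : ℝ) else 0)
        = if k = k₀ then 0 else 1 := by
      intro k
      by_cases hk : k = k₀
      · subst hk
        rw [if_neg (by linarith [hp0, hpβ.1]), if_pos rfl]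
      · rw [if_pos (lt_of_le_of_lt hpβ.2 (hp1 k hk)), if_neg hk]
    have hnum : (∑ k : Fin K, (1 - (if v k p.1 p.2 > β p.1 p.2 then (1 : ℝ) else 0)) * v k p.1 p.2)
        = v k₀ p.1 p.2 := by
      rw [Fintype.sum_eq_single k₀]
      · rw [hind k₀]; simp
      · intro k hk; rw [hind k, if_neg hk]; ring
    have hden : (∑ k : Fin K, (1 - (if v k p.1 p.2 > β p.1 p.2 then (1 : ℝ) else 0))) = 1 := by
      rw [Fintype.sum_eq_single k₀]
      · rw [hind k₀]; simp
      · intro k hk; rw [hind k, if_neg hk]; ring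
    rw [hnum, hden, max_self, div_one]
  exact hv0.congr' (hev.mono fun p hp => hp.symm)
end

section
/- Let K ≥ 2 and k̃ ∈ Fin K. Let v : Fin K → ℕ → ℕ → [0,1] and β : ℕ → ℕ → ℝ with β(n,m) ≥ 0 for all n, m. Assume that for every k ≠ k̃, v_k(n,m) → 1 along the product filter, and v_{k̃}(n,m) → 0 along the product filter. Let d̂(n,m) = d̂(v(n,m), β(n,m)) be the thresholding decision and cFDR(n,m) = cFDR(d̂(n,m), v(n,m)). Then: (a) if eventually along the product filter d̂_{k̃}(n,m) = 1 (i.e., v_{k̃}(n,m) > β(n,m)), then β(n,m) → 0 along the product filter, eventually d̂_k(n,m) = 1 for all k, and cFDR(n,m) → 1/K; (b) if eventually along the product filter d̂_{k̃}(n,m) = 0, then cFDR(n,m) → 0. In particular, the only possible nonzero asymptotic value of cFDR under such thresholding decisions is 1/K. -/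
open Filter Finset

/-- The only possible nonzero asymptotic value of the conditional FDR under the
thresholding decision is `1/K`: (a) if eventually the best model `k₀` is rejected
(`v k₀ > β`), then `β → 0`, eventually all hypotheses are rejected, and `cFDR → 1/K`;
(b) if eventually the best model is not rejected, then `cFDR → 0`. -/
theorem cFDR_alpha_control_one_over_K
    (K : ℕ) (hK : 2 ≤ K) (k₀ : Fin K)
    (v : Fin K → ℕ → ℕ → ℝ)
    (hv01 : ∀ k n m, 0 ≤ v k n m ∧ v k n m ≤ 1)
    (β : ℕ → ℕ → ℝ) (hβ0 : ∀ n m, 0 ≤ β n m)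
    (hv1 : ∀ k : Fin K, k ≠ k₀ →
      Tendsto (fun p : ℕ × ℕ => v k p.1 p.2) (atTop ×ˢ atTop) (nhds 1))
    (hv0 : Tendsto (fun p : ℕ × ℕ => v k₀ p.1 p.2) (atTop ×ˢ atTop) (nhds 0)) :
    ((∀ᶠ p : ℕ × ℕ in atTop ×ˢ atTop, v k₀ p.1 p.2 > β p.1 p.2) →
      (Tendsto (fun p : ℕ × ℕ => β p.1 p.2) (atTop ×ˢ atTop) (nhds 0) ∧
       (∀ᶠ p : ℕ × ℕ in atTop ×ˢ atTop, ∀ k : Fin K, v k p.1 p.2 > β p.1 p.2) ∧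
       Tendsto
         (fun p : ℕ × ℕ =>
           (∑ k : Fin K,
               (if v k p.1 p.2 > β p.1 p.2 then (1 : ℝ) else 0) * (1 - v k p.1 p.2)) /
             max (∑ k : Fin K, (if v k p.1 p.2 > β p.1 p.2 then (1 : ℝ) else 0)) 1)
         (atTop ×ˢ atTop) (nhds (1 / K))))
    ∧
    ((∀ᶠ p : ℕ × ℕ in atTop ×ˢ atTop, ¬ (v k₀ p.1 p.2 > β p.1 p.2)) →
      Tendsto
        (fun p : ℕ × ℕ =>
          (∑ k : Fin K,
              (if v k p.1 p.2 > β p.1 p.2 then (1 : ℝ) else 0) * (1 - v k p.1 p.2)) /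
            max (∑ k : Fin K, (if v k p.1 p.2 > β p.1 p.2 then (1 : ℝ) else 0)) 1)
        (atTop ×ˢ atTop) (nhds 0)) := by

  constructor
  · intro h0
    -- β → 0
    have hβto : Tendsto (fun p : ℕ × ℕ => β p.1 p.2) (atTop ×ˢ atTop) (nhds 0) := by
      refine tendsto_of_tendsto_of_tendsto_of_le_of_le' tendsto_const_nhds hv0
        (Eventually.of_forall fun p => hβ0 p.1 p.2) ?_
      exact h0.mono fun p hp => le_of_lt hp
    -- eventually all rejected
    have hall : ∀ᶠ p : ℕ × ℕ in atTop ×ˢ atTop, ∀ k : Fin K, v k p.1 p.2 > β p.1 p.2 := by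
      refine Filter.eventually_all.mpr fun k => ?_
      by_cases hk : k = k₀
      · subst hk; exact h0
      · have ht : Tendsto (fun p : ℕ × ℕ => v k p.1 p.2 - β p.1 p.2) (atTop ×ˢ atTop)
            (nhds 1) := by
          have := (hv1 k hk).sub hβto
          simpa using this
        have : ∀ᶠ p : ℕ × ℕ in atTop ×ˢ atTop, 0 < v k p.1 p.2 - β p.1 p.2 :=
          ht.eventually_const_lt (by norm_num)
        exact this.mono fun p hp => sub_pos.mp hp
    refine ⟨hβto, hall, ?_⟩
    -- the sum of (1 - v k) tends to 1
    have hsum : Tendsto (fun p : ℕ × ℕ => ∑ k : Fin K, (1 - v k p.1 p.2)) (atTop ×ˢ atTop)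
        (nhds 1) := by
      have h1 : Tendsto (fun p : ℕ × ℕ => ∑ k : Fin K, (1 - v k p.1 p.2)) (atTop ×ˢ atTop)
          (nhds (∑ k : Fin K, (if k = k₀ then (1:ℝ) else 0))) := by
        refine tendsto_finset_sum _ fun k _ => ?_
        by_cases hk : k = k₀
        · subst hk; simp only [if_pos rfl]
          have := (tendsto_const_nhds (x := (1:ℝ)) (f := atTop ×ˢ atTop)).sub hv0
          simpa using this
        · simp only [if_neg hk]
          have := (tendsto_const_nhds (x := (1:ℝ)) (f := atTop ×ˢ atTop)).sub (hv1 k hk)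
          simpa using this
      simpa [Finset.sum_ite_eq' Finset.univ k₀ (fun _ => (1:ℝ))] using h1
    have hKpos : (0:ℝ) < (K:ℝ) := by positivity
    have hfin : Tendsto (fun p : ℕ × ℕ => (∑ k : Fin K, (1 - v k p.1 p.2)) / (K:ℝ))
        (atTop ×ˢ atTop) (nhds (1 / K)) := hsum.div_const _
    refine Tendsto.congr' ?_ hfin
    filter_upwards [hall] with p hp
    have h1 : (∑ k : Fin K, (if v k p.1 p.2 > β p.1 p.2 then (1:ℝ) else 0)) = (K:ℝ) := by
      rw [Finset.sum_congr rfl fun k _ => if_pos (hp k)]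
      simp
    have h2 : (∑ k : Fin K,
        (if v k p.1 p.2 > β p.1 p.2 then (1:ℝ) else 0) * (1 - v k p.1 p.2))
        = ∑ k : Fin K, (1 - v k p.1 p.2) := by
      refine Finset.sum_congr rfl fun k _ => ?_
      rw [if_pos (hp k), one_mul]
    rw [h2, h1, max_eq_left (by norm_num [hKpos.le]; exact_mod_cast Nat.one_le_of_lt hK)]
  · intro h0
    set f := fun p : ℕ × ℕ =>
      (∑ k : Fin K, (if v k p.1 p.2 > β p.1 p.2 then (1 : ℝ) else 0) * (1 - v k p.1 p.2)) /
        max (∑ k : Fin K, (if v k p.1 p.2 > β p.1 p.2 then (1 : ℝ) else 0)) 1 with hf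
    have hnumnn : ∀ p : ℕ × ℕ, 0 ≤ ∑ k : Fin K,
        (if v k p.1 p.2 > β p.1 p.2 then (1 : ℝ) else 0) * (1 - v k p.1 p.2) := by
      intro p
      refine Finset.sum_nonneg fun k _ => mul_nonneg ?_ ?_
      · split <;> norm_num
      · linarith [(hv01 k p.1 p.2).2]
    have hfnn : ∀ p : ℕ × ℕ, 0 ≤ f p := by
      intro p
      exact div_nonneg (hnumnn p) (le_trans zero_le_one (le_max_right _ _))
    have hg : Tendsto (fun p : ℕ × ℕ => ∑ k : Fin K,
        (if k = k₀ then (0:ℝ) else 1 - v k p.1 p.2)) (atTop ×ˢ atTop) (nhds 0) := by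
      have h1 : Tendsto (fun p : ℕ × ℕ => ∑ k : Fin K,
          (if k = k₀ then (0:ℝ) else 1 - v k p.1 p.2)) (atTop ×ˢ atTop)
          (nhds (∑ _k : Fin K, (0:ℝ))) := by
        refine tendsto_finset_sum _ fun k _ => ?_
        by_cases hk : k = k₀
        · simp [hk]
        · simp only [if_neg hk]
          have := (tendsto_const_nhds (x := (1:ℝ)) (f := atTop ×ˢ atTop)).sub (hv1 k hk)
          simpa using this
      simpa using h1
    refine squeeze_zero' (Eventually.of_forall hfnn) ?_ hg
    filter_upwards [h0] with p hp
    have hden : (1:ℝ) ≤ max (∑ k : Fin K, (if v k p.1 p.2 > β p.1 p.2 then (1 : ℝ) else 0)) 1 :=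
      le_max_right _ _
    have h1 : f p ≤ ∑ k : Fin K,
        (if v k p.1 p.2 > β p.1 p.2 then (1 : ℝ) else 0) * (1 - v k p.1 p.2) :=
      div_le_self (hnumnn p) hden
    refine h1.trans (Finset.sum_le_sum fun k _ => ?_)
    by_cases hk : k = k₀
    · subst hk; rw [if_neg hp, if_pos rfl, zero_mul]
    · rw [if_neg hk]
      split
      · rw [one_mul]
      · rw [zero_mul]; linarith [(hv01 k p.1 p.2).2]
end

section
/- Let K ≥ 2 and k̃ ∈ Fin K. Let v : Fin K → ℕ → ℕ → [0,1] and β : ℕ → ℕ → ℝ with β(n,m) ≥ 0 for all n, m. Assume that for every k ≠ k̃, v_k(n,m) → 1 along the product filter, that v_{k̃}(n,m) → 0 along the product filter, and that eventually along the product filter v_{k̃}(n,m) > β(n,m). Then there exist N, M such that for all n ≥ N and m ≥ M, the conditional false non-discovery rate of the thresholding decision is exactly zero: cFNR(d̂(v(n,m), β(n,m)), v(n,m)) = 0. -/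
open Filter Finset

/-- Under asymptotic FDR control at level `1/K` (i.e. eventually `v k₀ > β`, so that
the best model is also rejected), the conditional FNR of the thresholding decision
is exactly zero for all sufficiently large `n` and `m`. -/
theorem cFNR_exactly_zero_under_alpha_control
    (K : ℕ) (hK : 2 ≤ K) (k₀ : Fin K)
    (v : Fin K → ℕ → ℕ → ℝ)
    (hv01 : ∀ k n m, 0 ≤ v k n m ∧ v k n m ≤ 1)
    (β : ℕ → ℕ → ℝ) (hβ0 : ∀ n m, 0 ≤ β n m)
    (hv1 : ∀ k : Fin K, k ≠ k₀ →
      Tendsto (fun p : ℕ × ℕ => v k p.1 p.2) (atTop ×ˢ atTop) (nhds 1))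
    (hv0 : Tendsto (fun p : ℕ × ℕ => v k₀ p.1 p.2) (atTop ×ˢ atTop) (nhds 0))
    (hrej : ∀ᶠ p : ℕ × ℕ in atTop ×ˢ atTop, v k₀ p.1 p.2 > β p.1 p.2) :
    ∃ N M : ℕ, ∀ n ≥ N, ∀ m ≥ M,
      (∑ k : Fin K, (1 - (if v k n m > β n m then (1 : ℝ) else 0)) * v k n m) /
        max (∑ k : Fin K, (1 - (if v k n m > β n m then (1 : ℝ) else 0))) 1 = 0 := by
  have hsmall : ∀ᶠ p : ℕ × ℕ in atTop ×ˢ atTop, v k₀ p.1 p.2 < 1/2 :=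
    hv0.eventually (gt_mem_nhds (by norm_num))
  have hbig : ∀ᶠ p : ℕ × ℕ in atTop ×ˢ atTop, ∀ k : Fin K, k ≠ k₀ → v k p.1 p.2 > 1/2 := by
    refine eventually_all.mpr fun k => ?_
    by_cases hk : k = k₀
    · filter_upwards with p h; exact absurd hk h
    · filter_upwards [(hv1 k hk).eventually (lt_mem_nhds (by norm_num : (1:ℝ)/2 < 1))]
        with p hp _
      exact hp
  have hall : ∀ᶠ p : ℕ × ℕ in atTop ×ˢ atTop, ∀ k : Fin K, v k p.1 p.2 > β p.1 p.2 := by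
    filter_upwards [hsmall, hbig, hrej] with p h1 h2 h3 k
    by_cases hk : k = k₀
    · rw [hk]; exact h3
    · exact lt_of_lt_of_le (lt_of_lt_of_le h3 h1.le) (h2 k hk).le
  rw [prod_atTop_atTop_eq, eventually_atTop] at hall
  obtain ⟨⟨N, M⟩, hNM⟩ := hall
  refine ⟨N, M, fun n hn m hm => ?_⟩
  have h := hNM (n, m) ⟨hn, hm⟩
  have : ∀ k : Fin K, (1 - (if v k n m > β n m then (1 : ℝ) else 0)) = 0 := by
    intro k; simp [h k]
  simp [this]
end
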